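/- Hyperintensionality of ignorance-whether is witnessed: there is a topic-sensitive model M with a world w such that p ↔ (p ∧ (q ∨ ¬q)) holds at every world of M, yet M, w ⊨ ¬I^w p and M, w ⊨ I^w(p ∧ (q ∨ ¬q)). -/

import Mathlib

/-- Formulas of the topic-sensitive languages, with ignorance operators
`Iw` (ignorance whether), `Iu` (unknown truth), `Id` (disbelieving ignorance),
and the grasping operator `G`. -/
inductive Form : Type where
  | var : ℕ → Form
  | neg : Form → Form
  | conj : Form → Form → Form
  | Iw : Form → Form
  | Iu : Form → Form
  | Id : Form → Form
  | G : Form → Form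

def Form.disj (φ ψ : Form) : Form := .neg (.conj (.neg φ) (.neg ψ))
def Form.impl (φ ψ : Form) : Form := .neg (.conj φ (.neg ψ))
def Form.iff (φ ψ : Form) : Form := .conj (φ.impl ψ) (ψ.impl φ)

/-- A topic model: topics `T`, an idempotent commutative associative fusion,
a designated topic `K` (the totality of grasped topics), and a topic
assignment to propositional variables. -/
structure TopicModel (T : Type) where
  fuse : T → T → T
  fuse_idem : ∀ a, fuse a a = a
  fuse_comm : ∀ a b, fuse a b = fuse b a
  fuse_assoc : ∀ a b c, fuse (fuse a b) c = fuse a (fuse b c)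
  K : T
  tv : ℕ → T

/-- Topic parthood: `a ⊑ b` iff `a ⊕ b = b`. -/
def TopicModel.part {T : Type} (TM : TopicModel T) (a b : T) : Prop :=
  TM.fuse a b = b

/-- Topic of a formula: fusion of the topics of its variables
(all operators are topic-transparent). -/
def TopicModel.t {T : Type} (TM : TopicModel T) : Form → T
  | .var p => TM.tv p
  | .neg φ => TM.t φ
  | .conj φ ψ => TM.fuse (TM.t φ) (TM.t ψ)
  | .Iw φ => TM.t φ
  | .Iu φ => TM.t φ
  | .Id φ => TM.t φ
  | .G φ => TM.t φ

/-- A topic-sensitive model. -/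
structure TSModel (W T : Type) where
  ne : Nonempty W
  R : W → W → Prop
  v : ℕ → W → Prop
  TM : TopicModel T

/-- Satisfaction in a topic-sensitive model. -/
def TSModel.sat {W T : Type} (M : TSModel W T) : W → Form → Prop
  | w, .var p => M.v p w
  | w, .neg φ => ¬ M.sat w φ
  | w, .conj φ ψ => M.sat w φ ∧ M.sat w ψ
  | w, .Iw φ => ¬ M.TM.part (M.TM.t φ) M.TM.K ∨
      ∃ w' w'', M.R w w' ∧ M.R w w'' ∧ M.sat w' φ ∧ ¬ M.sat w'' φ
  | w, .Iu φ => ¬ M.TM.part (M.TM.t φ) M.TM.K ∨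
      (M.sat w φ ∧ ∃ w', M.R w w' ∧ ¬ M.sat w' φ)
  | w, .Id φ => M.TM.part (M.TM.t φ) M.TM.K ∧ M.sat w φ ∧
      ∀ w', w' ≠ w → M.R w w' → ¬ M.sat w' φ
  | _, .G φ => M.TM.part (M.TM.t φ) M.TM.K

/-- `φ̄`: the conjunction of excluded-middle instances `x ∨ ¬x` over the
variables occurring in `φ`. -/
def Form.bar : Form → Form
  | .var p => (Form.var p).disj (Form.neg (Form.var p))
  | .neg φ => φ.bar
  | .conj φ ψ => .conj φ.bar ψ.bar
  | .Iw φ => φ.bar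
  | .Iu φ => φ.bar
  | .Id φ => φ.bar
  | .G φ => φ.bar

/-- Validity in all topic-sensitive models. -/
def TSValid (φ : Form) : Prop :=
  ∀ (W T : Type) (M : TSModel W T) (w : W), M.sat w φ

/-- hyperintensionality of ignorance-whether. -/
theorem hyperintensionality_Iw :
    ∃ (W T : Type) (M : TSModel W T) (w : W),
      (∀ u : W, M.sat u ((Form.var 0).iff
        ((Form.var 0).conj ((Form.var 1).disj (.neg (.var 1)))))) ∧
      M.sat w (.neg (.Iw (.var 0))) ∧
      M.sat w (.Iw ((Form.var 0).conj ((Form.var 1).disj (.neg (.var 1))))) := by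
  refine ⟨Unit, Bool, ⟨⟨()⟩, fun _ _ => True, fun _ _ => True,
    ⟨or, Bool.or_self, Bool.or_comm, Bool.or_assoc, false,
      fun n => n != 0⟩⟩, (), ?_, ?_, ?_⟩
  · intro u
    simp [TSModel.sat, Form.iff, Form.impl, Form.disj]
  · simp [TSModel.sat, TopicModel.part, TopicModel.t]
  · simp [TSModel.sat, TopicModel.part, TopicModel.t, Form.disj]
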